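/- Let f be holomorphic on the closed disc |z - a| ≤ R with f(a) ≠ 0 and f nonvanishing on the circle |z - a| = R. Let ρ_j = a + r_j e^{iθ_j} denote the zeros of f in the open disc, with multiplicities n_j. Then Re(f'(a)/f(a)) = -∑_j n_j (1/r_j - r_j/R²) cos θ_j + (1/(πR)) ∫₀^{2π} cos θ · log|f(a + R e^{iθ})| dθ. -/

import Mathlib

open Complex Real Metric intervalIntegral

/-- Derivative of `log |w t|` for a complex-valued function of a real variable. -/
lemma hasDerivAt_log_abs {w : ℝ → ℂ} {w' : ℂ} {t : ℝ} (hw : HasDerivAt w w' t)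
    (hne : w t ≠ 0) :
    HasDerivAt (fun s => Real.log (‖w s‖)) ((w' / w t).re) t := by
  have hre : HasDerivAt (fun s => (w s).re) w'.re t :=
    Complex.reCLM.hasFDerivAt.comp_hasDerivAt t hw
  have him : HasDerivAt (fun s => (w s).im) w'.im t :=
    Complex.imCLM.hasFDerivAt.comp_hasDerivAt t hw
  have hns : HasDerivAt (fun s => Complex.normSq (w s))
      (w'.re * (w t).re + (w t).re * w'.re + (w'.im * (w t).im + (w t).im * w'.im)) t := by
    simpa only [Complex.normSq_apply] using (hre.fun_mul hre).fun_add (him.fun_mul him)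
  have hns0 : Complex.normSq (w t) ≠ 0 := by
    simpa [Complex.normSq_eq_zero] using hne
  have h2 : HasDerivAt (fun s => Real.log (Complex.normSq (w s)) / 2)
      ((w'.re * (w t).re + (w t).re * w'.re + (w'.im * (w t).im + (w t).im * w'.im))
        / Complex.normSq (w t) / 2) t := (hns.log hns0).div_const 2
  have hfun : (fun s => Real.log (Complex.normSq (w s)) / 2)
      = fun s => Real.log (‖w s‖) := by
    funext s
    rw [← Complex.sq_norm, Real.log_pow]
    push_cast; ring
  rw [hfun] at h2
  convert h2 using 1
  rw [Complex.div_re]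
  field_simp
  ring

/-- Heath–Brown key formula: for `u` analytic and nonvanishing on the closed disc,
`∫ cos φ · log |u| = π R Re (u'/u) (a)`. -/
lemma keyL (u : ℂ → ℂ) (a : ℂ) (R : ℝ) (hR : 0 < R)
    (hu : AnalyticOnNhd ℂ u (closedBall a R)) (hu0 : ∀ z ∈ closedBall a R, u z ≠ 0) :
    ∫ φ in (0:ℝ)..(2*π), Real.cos φ * Real.log (‖u (circleMap a R φ)‖)
      = π * R * (deriv u a / u a).re := by
  set q : ℂ → ℂ := fun z => deriv u z / u z with hq_def
  have hqa : ∀ z ∈ closedBall a R, AnalyticAt ℂ q z := fun z hz =>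
    (hu.deriv z hz).div (hu z hz) (hu0 z hz)
  have hmem : ∀ φ : ℝ, circleMap a R φ ∈ closedBall a R :=
    fun φ => circleMap_mem_closedBall a hR.le φ
  -- continuity of q along the circle
  have hqc : Continuous fun φ => q (circleMap a R φ) := by
    rw [continuous_iff_continuousAt]
    intro φ
    exact ((hqa _ (hmem φ)).differentiableAt.continuousAt).comp
      (continuous_circleMap a R).continuousAt
  -- derivative of the boundary log
  have key : ∀ φ : ℝ, HasDerivAt (fun t => Real.log (‖u (circleMap a R t)‖))
      ((q (circleMap a R φ) * (circleMap 0 R φ * I)).re) φ := by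
    intro φ
    have hne : u (circleMap a R φ) ≠ 0 := hu0 _ (hmem φ)
    have hud : HasDerivAt u (deriv u (circleMap a R φ)) (circleMap a R φ) :=
      ((hu _ (hmem φ)).differentiableAt).hasDerivAt
    have hw : HasDerivAt (fun t => u (circleMap a R t))
        ((circleMap 0 R φ * I) • deriv u (circleMap a R φ)) φ :=
      hud.scomp φ (hasDerivAt_circleMap a R φ)
    have := hasDerivAt_log_abs hw hne
    convert this using 1
    simp only [smul_eq_mul, hq_def]
    rw [div_mul_eq_mul_div, mul_comm]
  -- the complex-valued integrand along the circle, continuity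
  have hLc : Continuous fun φ => Real.log (‖u (circleMap a R φ)‖) := by
    rw [continuous_iff_continuousAt]
    intro φ
    refine (Real.continuousAt_log ?_).comp (continuous_norm.continuousAt.comp
      ((hu _ (hmem φ)).differentiableAt.continuousAt.comp
        (continuous_circleMap a R).continuousAt))
    simp [hu0 _ (hmem φ)]
  have hL'c : Continuous fun φ => (q (circleMap a R φ) * (circleMap 0 R φ * I)).re :=
    Complex.continuous_re.comp (hqc.mul ((continuous_circleMap 0 R).mul continuous_const))
  -- integration by parts
  have parts := intervalIntegral.integral_mul_deriv_eq_deriv_mul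
    (u := fun φ => Real.log (‖u (circleMap a R φ)‖))
    (u' := fun φ => (q (circleMap a R φ) * (circleMap 0 R φ * I)).re)
    (v := Real.sin) (v' := Real.cos) (a := 0) (b := 2*π)
    (fun x _ => key x) (fun x _ => Real.hasDerivAt_sin x)
    (hL'c.intervalIntegrable _ _) (Real.continuous_cos.intervalIntegrable _ _)
  -- Goursat : ∫ e^{2iφ} q = 0
  have goursat : (∫ φ in (0:ℝ)..(2*π),
      Complex.exp (φ * I) * Complex.exp (φ * I) * q (circleMap a R φ)) = 0 := by
    have hF : (∮ z in C(a, R), (z - a) * q z) = 0 := by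
      refine Complex.circleIntegral_eq_zero_of_differentiable_on_off_countable hR.le
        Set.countable_empty ?_ ?_
      · intro z hz
        exact ((continuousAt_id.sub continuousAt_const).mul
          (hqa z hz).differentiableAt.continuousAt).continuousWithinAt
      · intro z hz
        exact (differentiableAt_id.sub_const a).mul
          (hqa z (ball_subset_closedBall hz.1)).differentiableAt
    rw [circleIntegral] at hF
    have : (∫ φ in (0:ℝ)..(2*π), deriv (circleMap a R) φ •
        ((circleMap a R φ - a) * q (circleMap a R φ)))
        = ∫ φ in (0:ℝ)..(2*π), ((R:ℂ)^2 * I) *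
          (Complex.exp (φ * I) * Complex.exp (φ * I) * q (circleMap a R φ)) := by
      refine intervalIntegral.integral_congr fun φ _ => ?_
      rw [deriv_circleMap, circleMap_sub_center, circleMap_zero]
      simp only [smul_eq_mul]
      ring
    rw [this, intervalIntegral.integral_const_mul] at hF
    have hR2 : ((R:ℂ)^2 * I) ≠ 0 := by
      simp [Complex.I_ne_zero, Complex.ofReal_ne_zero, ne_of_gt hR]
    exact (mul_eq_zero.mp hF).resolve_left hR2
  -- Cauchy : ∫ q = 2π q a
  have cauchy : (∫ φ in (0:ℝ)..(2*π), q (circleMap a R φ)) = 2 * π * q a := by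
    have hF : (∮ z in C(a, R), (z - a)⁻¹ • q z) = (2 * π * I : ℂ) • q a := by
      refine Complex.circleIntegral_sub_inv_smul_of_differentiable_on_off_countable
        Set.countable_empty (mem_ball_self hR) ?_ ?_
      · intro z hz
        exact (hqa z hz).differentiableAt.continuousAt.continuousWithinAt
      · intro z hz
        exact (hqa z (ball_subset_closedBall hz.1)).differentiableAt
    rw [circleIntegral] at hF
    have : (∫ φ in (0:ℝ)..(2*π), deriv (circleMap a R) φ •
        ((circleMap a R φ - a)⁻¹ • q (circleMap a R φ)))
        = ∫ φ in (0:ℝ)..(2*π), I * q (circleMap a R φ) := by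
      refine intervalIntegral.integral_congr fun φ _ => ?_
      rw [deriv_circleMap, circleMap_sub_center]
      have h0 : circleMap 0 R φ ≠ 0 := circleMap_ne_center (ne_of_gt hR)
      field_simp
      simp only [smul_eq_mul, one_div]
      rw [mul_comm (circleMap 0 R φ) I, mul_assoc, ← mul_assoc (circleMap 0 R φ), mul_inv_cancel₀ h0,
        one_mul]
    rw [this, intervalIntegral.integral_const_mul] at hF
    refine mul_left_cancel₀ Complex.I_ne_zero ?_
    rw [hF, smul_eq_mul]
    ring
  -- the complex integral
  have hX : (∫ φ in (0:ℝ)..(2*π), (Real.sin φ : ℂ) *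
      (q (circleMap a R φ) * (circleMap 0 R φ * I))) = -(π * R) * q a := by
    have hcongr : (∫ φ in (0:ℝ)..(2*π), (Real.sin φ : ℂ) *
        (q (circleMap a R φ) * (circleMap 0 R φ * I)))
        = ∫ φ in (0:ℝ)..(2*π), ((R:ℂ)/2) *
          (Complex.exp (φ * I) * Complex.exp (φ * I) * q (circleMap a R φ)
            - q (circleMap a R φ)) := by
      refine intervalIntegral.integral_congr fun φ _ => ?_
      rw [Complex.ofReal_sin, Complex.sin, circleMap_zero]
      have hE : Complex.exp (-(φ:ℂ) * I) * Complex.exp ((φ:ℂ) * I) = 1 := by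
        rw [← Complex.exp_add]; ring_nf; exact Complex.exp_zero
      linear_combination (((R:ℂ)/2) * (Complex.exp (-(φ:ℂ) * I) * Complex.exp ((φ:ℂ) * I)
          - Complex.exp ((φ:ℂ)*I)^2) * q (circleMap a R φ)) * Complex.I_sq
        + (-((R:ℂ)/2) * q (circleMap a R φ)) * hE
    rw [hcongr, intervalIntegral.integral_const_mul]
    have hsub : (∫ φ in (0:ℝ)..(2*π),
        (Complex.exp (φ * I) * Complex.exp (φ * I) * q (circleMap a R φ)
          - q (circleMap a R φ)))
        = (∫ φ in (0:ℝ)..(2*π),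
            Complex.exp (φ * I) * Complex.exp (φ * I) * q (circleMap a R φ))
          - ∫ φ in (0:ℝ)..(2*π), q (circleMap a R φ) := by
      refine intervalIntegral.integral_sub ?_ ?_
      · exact (((Complex.continuous_exp.comp (Complex.continuous_ofReal.mul
          continuous_const)).mul (Complex.continuous_exp.comp
          (Complex.continuous_ofReal.mul continuous_const))).mul hqc).intervalIntegrable _ _
      · exact hqc.intervalIntegrable _ _
    rw [hsub, goursat, cauchy]
    ring
  -- take real parts
  have hre : (∫ φ in (0:ℝ)..(2*π),
      (q (circleMap a R φ) * (circleMap 0 R φ * I)).re * Real.sin φ)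
      = -(π * R) * (q a).re := by
    have hint : IntervalIntegrable (fun φ => (Real.sin φ : ℂ) *
        (q (circleMap a R φ) * (circleMap 0 R φ * I))) MeasureTheory.volume 0 (2*π) := by
      exact ((Complex.continuous_ofReal.comp Real.continuous_sin).mul
        (hqc.mul ((continuous_circleMap 0 R).mul continuous_const))).intervalIntegrable _ _
    have hcc := Complex.reCLM.intervalIntegral_comp_comm hint
    rw [hX] at hcc
    have h2 : (∫ φ in (0:ℝ)..(2*π), (q (circleMap a R φ) * (circleMap 0 R φ * I)).re
        * Real.sin φ) = ∫ φ in (0:ℝ)..(2*π), Complex.reCLM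
          ((Real.sin φ : ℂ) * (q (circleMap a R φ) * (circleMap 0 R φ * I))) := by
      refine intervalIntegral.integral_congr fun φ _ => ?_
      simp only [Complex.reCLM_apply, Complex.re_ofReal_mul]
      ring
    rw [h2, hcc]
    simp only [Complex.reCLM_apply]
    rw [show (-(↑π * ↑R) * q a : ℂ) = ((-(π * R) : ℝ) : ℂ) * q a by push_cast; ring,
      Complex.re_ofReal_mul]
  -- conclude
  have hfinal : (∫ φ in (0:ℝ)..(2*π),
      Real.log (‖u (circleMap a R φ)‖) * Real.cos φ)
      = π * R * (q a).re := by
    rw [parts, hre]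
    simp [Real.sin_two_pi]
  rw [show π * R * (deriv u a / u a).re = π * R * (q a).re from rfl, ← hfinal]
  exact intervalIntegral.integral_congr fun φ _ => mul_comm _ _

lemma contBoundary (u : ℂ → ℂ) (a : ℂ) (R : ℝ) (hR : 0 ≤ R)
    (hu : AnalyticOnNhd ℂ u (closedBall a R)) (hu0 : ∀ z ∈ closedBall a R, u z ≠ 0) :
    Continuous fun φ : ℝ => Real.log (‖u (circleMap a R φ)‖) := by
  rw [continuous_iff_continuousAt]
  intro φ
  have hz := circleMap_mem_closedBall a hR φ
  refine (Real.continuousAt_log ?_).comp (continuous_norm.continuousAt.comp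
    ((hu _ hz).differentiableAt.continuousAt.comp (continuous_circleMap a R).continuousAt))
  simp [hu0 _ hz]

/-- Heath-Brown's lemma: the zeros of `f` in the disc are encoded by the factorization
`f z = (∏ j, (z - ρ j) ^ n j) * g z` with `g` analytic and nonvanishing on the closed disc. -/
theorem heath_brown_lemma (f g : ℂ → ℂ) (a : ℂ) (R : ℝ) (hR : 0 < R)
    (m : ℕ) (ρ : Fin m → ℂ) (r θ : Fin m → ℝ) (n : Fin m → ℕ)
    (hf : AnalyticOnNhd ℂ f (closedBall a R))
    (hg : AnalyticOnNhd ℂ g (closedBall a R))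
    (hg0 : ∀ z ∈ closedBall a R, g z ≠ 0)
    (hfact : ∀ z ∈ closedBall a R, f z = (∏ j, (z - ρ j) ^ n j) * g z)
    (hρ : ∀ j, ρ j ∈ ball a R)
    (hρ' : ∀ j, ρ j = a + (r j : ℂ) * Complex.exp ((θ j : ℂ) * Complex.I))
    (hr : ∀ j, 0 < r j)
    (hfa : f a ≠ 0) :
    (deriv f a / f a).re =
      - (∑ j, (n j : ℝ) * (1 / r j - r j / R ^ 2) * Real.cos (θ j)) +
      (1 / (π * R)) * ∫ φ in (0 : ℝ)..(2 * π),
        Real.cos φ *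
          Real.log (‖f (a + (R : ℂ) * Complex.exp ((φ : ℂ) * Complex.I))‖) := by
  have hR0 : (R:ℂ) ≠ 0 := Complex.ofReal_ne_zero.mpr (ne_of_gt hR)
  have hamem : a ∈ closedBall a R := mem_closedBall_self hR.le
  have hmem : ∀ φ : ℝ, circleMap a R φ ∈ closedBall a R :=
    fun φ => circleMap_mem_closedBall a hR.le φ
  set w : Fin m → ℂ := fun j => ρ j - a with hw_def
  have hw : ∀ j, w j = (r j : ℂ) * Complex.exp ((θ j : ℂ) * I) := by
    intro j; simp only [hw_def, hρ' j]; ring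
  have hwabs : ∀ j, ‖w j‖ = r j := by
    intro j
    rw [hw j, norm_mul, Complex.norm_exp_ofReal_mul_I, mul_one, Complex.norm_real, Real.norm_eq_abs,
      abs_of_pos (hr j)]
  have hwR : ∀ j, ‖w j‖ < R := by
    intro j
    have := hρ j
    rw [mem_ball, Complex.dist_eq] at this
    simpa [hw_def] using this
  have haρ : ∀ j, a - ρ j ≠ 0 := by
    intro j hj
    have hwj : w j = 0 := by
      rw [sub_eq_zero] at hj
      simp [hw_def, ← hj]
    have : (0:ℝ) < r j := hr j
    rw [← hwabs j, hwj] at this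
    simp at this
  -- the Blaschke-type comparison functions
  set h : Fin m → ℂ → ℂ :=
    fun j z => (R:ℂ) - (z - a) * (starRingEnd ℂ (w j) * (R:ℂ)⁻¹) with hh_def
  have hh_anal : ∀ j, AnalyticOnNhd ℂ (h j) (closedBall a R) := by
    intro j
    exact analyticOnNhd_const.sub
      (((analyticOnNhd_id).sub analyticOnNhd_const).mul analyticOnNhd_const)
  have hh0 : ∀ j, ∀ z ∈ closedBall a R, h j z ≠ 0 := by
    intro j z hz heq
    rw [hh_def, sub_eq_zero] at heq
    have habs := congrArg (‖·‖) heq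
    rw [norm_mul, norm_mul, Complex.norm_conj, norm_inv, Complex.norm_real, Real.norm_eq_abs,
      abs_of_pos hR, hwabs j] at habs
    have hza : ‖z - a‖ ≤ R := by
      rw [mem_closedBall, Complex.dist_eq] at hz; exact hz
    have : ‖z - a‖ * (r j * R⁻¹) ≤ r j := by
      rw [mul_comm (r j) R⁻¹, ← mul_assoc]
      calc ‖z - a‖ * R⁻¹ * r j ≤ R * R⁻¹ * r j :=
            mul_le_mul_of_nonneg_right (mul_le_mul_of_nonneg_right hza
              (inv_nonneg.mpr hR.le)) (hr j).le
        _ = r j := by field_simp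
    have hwRj := hwR j
    rw [hwabs j] at hwRj
    rw [← habs] at this
    exact absurd (lt_of_le_of_lt this hwRj) (lt_irrefl R)
  -- boundary absolute-value identity
  have hE1 : ∀ φ : ℝ, Complex.exp (-((φ:ℂ) * I)) * Complex.exp ((φ:ℂ) * I) = 1 := by
    intro φ
    rw [← Complex.exp_add]
    ring_nf
    exact Complex.exp_zero
  have hhval : ∀ j, ∀ φ : ℝ,
      ‖circleMap a R φ - ρ j‖ = ‖h j (circleMap a R φ)‖ := by
    intro j φ
    have h1 : circleMap a R φ - ρ j = (R:ℂ) * Complex.exp ((φ:ℂ) * I) - w j := by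
      simp only [circleMap, hw_def]
      ring
    have h2 : h j (circleMap a R φ)
        = (R:ℂ) - starRingEnd ℂ (w j) * Complex.exp ((φ:ℂ) * I) := by
      simp only [hh_def, circleMap]
      field_simp
      ring
    have h3 : starRingEnd ℂ ((R:ℂ) * Complex.exp ((φ:ℂ) * I) - w j)
        = Complex.exp (-((φ:ℂ) * I)) *
          ((R:ℂ) - starRingEnd ℂ (w j) * Complex.exp ((φ:ℂ) * I)) := by
      rw [map_sub, map_mul, Complex.conj_ofReal, ← Complex.exp_conj]
      simp only [map_mul, Complex.conj_ofReal, Complex.conj_I, mul_neg]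
      linear_combination (starRingEnd ℂ (w j)) * hE1 φ
    rw [h1, h2, ← Complex.norm_conj (↑R * Complex.exp (↑φ * I) - w j), h3, norm_mul]
    rw [show (-((φ:ℂ) * I)) = ((-φ : ℝ) : ℂ) * I by push_cast; ring,
      Complex.norm_exp_ofReal_mul_I, one_mul]
  -- boundary log decomposition
  have hlogb : ∀ φ : ℝ, Real.log (‖f (circleMap a R φ)‖)
      = (∑ j, (n j : ℝ) * Real.log (‖h j (circleMap a R φ)‖))
        + Real.log (‖g (circleMap a R φ)‖) := by
    intro φ
    have hne : ∀ j, circleMap a R φ - ρ j ≠ 0 := by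
      intro j
      rw [sub_ne_zero]
      exact circleMap_ne_mem_ball (hρ j) φ
    rw [hfact _ (hmem φ), norm_mul, Real.log_mul, norm_prod]
    · congr 1
      rw [Real.log_prod]
      · refine Finset.sum_congr rfl fun j _ => ?_
        rw [norm_pow, Real.log_pow, hhval j φ]
      · intro j _
        simp only [norm_pow, ne_eq, pow_eq_zero_iff', norm_eq_zero, not_and]
        exact fun hc => absurd hc (hne j)
    · simp only [norm_prod, Finset.prod_ne_zero_iff]
      intro j _
      simp only [norm_pow, ne_eq, pow_eq_zero_iff', norm_eq_zero, not_and]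
      exact fun hc => absurd hc (hne j)
    · simp [hg0 _ (hmem φ)]
  -- split the boundary integral
  have hsplit : (∫ φ in (0:ℝ)..(2*π), Real.cos φ * Real.log (‖f (circleMap a R φ)‖))
      = (∑ j, (n j : ℝ) * ∫ φ in (0:ℝ)..(2*π),
          Real.cos φ * Real.log (‖h j (circleMap a R φ)‖))
        + ∫ φ in (0:ℝ)..(2*π), Real.cos φ * Real.log (‖g (circleMap a R φ)‖) := by
    have hcongr : (∫ φ in (0:ℝ)..(2*π),
        Real.cos φ * Real.log (‖f (circleMap a R φ)‖))
        = ∫ φ in (0:ℝ)..(2*π),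
            ((∑ j, (n j : ℝ) * (Real.cos φ * Real.log (‖h j (circleMap a R φ)‖)))
              + Real.cos φ * Real.log (‖g (circleMap a R φ)‖)) := by
      refine intervalIntegral.integral_congr fun φ _ => ?_
      rw [hlogb φ, mul_add, Finset.mul_sum]
      congr 1
      exact Finset.sum_congr rfl fun j _ => by ring
    have hIntj : ∀ j : Fin m, IntervalIntegrable
        (fun φ => (n j : ℝ) * (Real.cos φ * Real.log (‖h j (circleMap a R φ)‖)))
        MeasureTheory.volume 0 (2*π) :=
      fun j => (continuous_const.mul (Real.continuous_cos.mul
        (contBoundary (h j) a R hR.le (hh_anal j) (hh0 j)))).intervalIntegrable _ _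
    have hInt1 : IntervalIntegrable (fun φ => ∑ j, (n j : ℝ) *
        (Real.cos φ * Real.log (‖h j (circleMap a R φ)‖)))
        MeasureTheory.volume 0 (2*π) := by
      refine (continuous_finset_sum _ fun j _ => ?_).intervalIntegrable _ _
      exact continuous_const.mul (Real.continuous_cos.mul
        (contBoundary (h j) a R hR.le (hh_anal j) (hh0 j)))
    have hInt2 : IntervalIntegrable
        (fun φ => Real.cos φ * Real.log (‖g (circleMap a R φ)‖))
        MeasureTheory.volume 0 (2*π) :=
      (Real.continuous_cos.mul (contBoundary g a R hR.le hg hg0)).intervalIntegrable _ _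
    rw [hcongr, intervalIntegral.integral_add hInt1 hInt2,
      intervalIntegral.integral_finset_sum (fun j _ => hIntj j)]
    congr 1
    exact Finset.sum_congr rfl fun j _ => intervalIntegral.integral_const_mul _ _
  -- keyL applied to g
  have Ig : (∫ φ in (0:ℝ)..(2*π), Real.cos φ * Real.log (‖g (circleMap a R φ)‖))
      = π * R * (deriv g a / g a).re := keyL g a R hR hg hg0
  -- keyL applied to h j
  have Ij : ∀ j, (∫ φ in (0:ℝ)..(2*π),
      Real.cos φ * Real.log (‖h j (circleMap a R φ)‖))
      = π * R * (-(r j * Real.cos (θ j)) / R^2) := by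
    intro j
    rw [keyL (h j) a R hR (hh_anal j) (hh0 j)]
    congr 1
    have hd : HasDerivAt (h j) (-(1 * (starRingEnd ℂ (w j) * (R:ℂ)⁻¹))) a :=
      (((hasDerivAt_id a).sub_const a).mul_const (starRingEnd ℂ (w j) * (R:ℂ)⁻¹)).const_sub (R:ℂ)
    have hval : h j a = (R:ℂ) := by simp [hh_def]
    rw [hd.deriv, hval]
    have hconj : starRingEnd ℂ (w j) = (r j : ℂ) * Complex.exp (-((θ j:ℂ) * I)) := by
      rw [hw j, map_mul, Complex.conj_ofReal, ← Complex.exp_conj]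
      simp only [map_mul, Complex.conj_ofReal, Complex.conj_I, mul_neg]
    have hrw : -(1 * (starRingEnd ℂ (w j) * (R:ℂ)⁻¹)) / (R:ℂ)
        = ((-(r j) / R^2 : ℝ) : ℂ) * Complex.exp (-((θ j:ℂ) * I)) := by
      rw [hconj]
      push_cast
      rw [div_eq_iff hR0]
      field_simp
    rw [hrw, show -((θ j:ℂ) * I) = ((-θ j : ℝ) : ℂ) * I by push_cast; ring,
      Complex.re_ofReal_mul, Complex.exp_ofReal_mul_I_re, Real.cos_neg]
    field_simp
  -- logarithmic derivative decomposition at the centre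
  have hPa : ∀ j, (a - ρ j) ^ n j ≠ 0 := fun j => pow_ne_zero _ (haρ j)
  have hdP : ∀ j : Fin m, DifferentiableAt ℂ (fun z => (z - ρ j) ^ n j) a :=
    fun j => (differentiableAt_id.sub_const _).pow _
  have hPane : (∏ j, (a - ρ j) ^ n j) ≠ 0 := Finset.prod_ne_zero_iff.mpr fun j _ => hPa j
  have hprod_diff : DifferentiableAt ℂ (fun z => ∏ j, (z - ρ j) ^ n j) a :=
    DifferentiableAt.fun_finsetProd fun j _ => hdP j
  have hterm : ∀ j : Fin m, logDeriv (fun z => (z - ρ j) ^ n j) a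
      = (n j : ℂ) * (a - ρ j)⁻¹ := by
    intro j
    have h1 := logDeriv_fun_pow (f := fun z => z - ρ j) (x := a)
      (differentiableAt_id.sub_const _) (n j)
    rw [show (fun z : ℂ => (z - ρ j) ^ n j) = ((fun z : ℂ => z - ρ j) · ^ n j) from rfl, h1]
    have : logDeriv (fun z : ℂ => z - ρ j) a = (a - ρ j)⁻¹ := by
      rw [logDeriv_apply, deriv_sub_const, deriv_id'']
      simp [one_div]
    rw [this]
  have hP : logDeriv (fun z => ∏ j, (z - ρ j) ^ n j) a
      = ∑ j, (n j : ℂ) * (a - ρ j)⁻¹ := by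
    have h2 := logDeriv_prod (s := Finset.univ) (f := fun j => fun z : ℂ => (z - ρ j) ^ n j) (x := a)
      (fun j _ => hPa j) (fun j _ => hdP j)
    rw [show (fun z => ∏ j, (z - ρ j) ^ n j)
        = (∏ j ∈ Finset.univ, ((fun z : ℂ => (z - ρ j) ^ n j)) ·) from rfl]
    rw [h2]
    exact Finset.sum_congr rfl fun j _ => hterm j
  have hlogf : deriv f a / f a = (∑ j, (n j : ℂ) * (a - ρ j)⁻¹) + deriv g a / g a := by
    have hev : f =ᶠ[nhds a] fun z => (∏ j, (z - ρ j) ^ n j) * g z :=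
      Filter.eventuallyEq_of_mem (closedBall_mem_nhds a hR) hfact
    have h1 : deriv f a = deriv (fun z => (∏ j, (z - ρ j) ^ n j) * g z) a := hev.deriv_eq
    have h2 : f a = (∏ j, (a - ρ j) ^ n j) * g a := hfact a hamem
    have h3 := logDeriv_mul (f := fun z => ∏ j, (z - ρ j) ^ n j) (g := g) a
      hPane (hg0 a hamem) hprod_diff (hg a hamem).differentiableAt
    rw [hP] at h3
    simp only [logDeriv_apply] at h3
    rw [h1, h2]
    exact h3
  -- real part of each zero term
  have hterm_re : ∀ j, ((n j:ℂ) * (a - ρ j)⁻¹).re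
      = -((n j:ℝ) * Real.cos (θ j) / r j) := by
    intro j
    have hrj : (r j : ℂ) ≠ 0 := Complex.ofReal_ne_zero.mpr (hr j).ne'
    have hEθ : Complex.exp ((θ j:ℂ) * I) * Complex.exp (-((θ j:ℂ) * I)) = 1 := by
      rw [← Complex.exp_add]
      ring_nf
      exact Complex.exp_zero
    have hinv : (a - ρ j)⁻¹ = -((r j:ℂ)⁻¹ * Complex.exp (-((θ j:ℂ) * I))) := by
      refine inv_eq_of_mul_eq_one_right ?_
      have ha : a - ρ j = -((r j:ℂ) * Complex.exp ((θ j:ℂ) * I)) := by rw [hρ' j]; ring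
      rw [ha]
      field_simp
      linear_combination hEθ
    rw [hinv]
    rw [show (n j:ℂ) * -((r j:ℂ)⁻¹ * Complex.exp (-((θ j:ℂ) * I)))
        = ((-(n j / r j) : ℝ) : ℂ) * Complex.exp (((-θ j : ℝ):ℂ) * I) by push_cast; ring]
    rw [Complex.re_ofReal_mul, Complex.exp_ofReal_mul_I_re, Real.cos_neg]
    ring
  -- final assembly
  have hπR : π * R ≠ 0 := by positivity
  simp only [show ∀ φ:ℝ, a + (R:ℂ) * Complex.exp ((φ:ℂ) * I) = circleMap a R φ
    from fun _ => rfl]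
  rw [hsplit, Ig, hlogf, Complex.add_re, Complex.re_sum]
  rw [Finset.sum_congr rfl fun j (_ : j ∈ Finset.univ) => hterm_re j]
  rw [Finset.sum_congr rfl fun j (_ : j ∈ Finset.univ) => congrArg ((n j : ℝ) * ·) (Ij j)]
  set G := (deriv g a / g a).re
  have hsimp : (1/(π*R)) * ((∑ j, (n j:ℝ) * (π * R * (-(r j * Real.cos (θ j))/R^2)))
      + π * R * G) = (∑ j, (n j:ℝ) * (-(r j * Real.cos (θ j))/R^2)) + G := by
    rw [mul_add]
    congr 1
    · rw [Finset.mul_sum]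
      refine Finset.sum_congr rfl fun j _ => ?_
      field_simp
    · field_simp
  rw [hsimp]
  rw [show -(∑ j, (n j : ℝ) * (1 / r j - r j / R ^ 2) * Real.cos (θ j))
      + ((∑ j, (n j:ℝ) * (-(r j * Real.cos (θ j))/R^2)) + G)
      = (∑ j, ((n j:ℝ) * (-(r j * Real.cos (θ j))/R^2)
          - (n j : ℝ) * (1 / r j - r j / R ^ 2) * Real.cos (θ j))) + G by
    rw [Finset.sum_sub_distrib]; ring]
  congr 1
  refine Finset.sum_congr rfl fun j _ => ?_
  have hrj : r j ≠ 0 := (hr j).ne'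
  have hRne : R ≠ 0 := hR.ne'
  field_simp
  ring
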